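/- arXiv:0805.0544 — 5 statements merged into one kernel-verified Lean document; each statement's English description precedes it below -/
import Mathlib

section
/- Define A(ℓ) := π² (2θ(ℓ) − sin(2θ(ℓ)))/(1 − cos(2θ(ℓ))) for ℓ > 1, where θ(ℓ) ∈ (0, π) satisfies ℓ = θ(ℓ)/sin θ(ℓ). Then A'(ℓ) = 2π²/sin θ(ℓ); in particular A is strictly increasing and A'(ℓ) > 2π² for all ℓ ≠ π/2. -/
open Real Set

private lemma sincos_pos {t : ℝ} (ht : t ∈ Set.Ioo 0 π) :
    0 < Real.sin t - t * Real.cos t := by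
  obtain ⟨h0, hπ⟩ := ht
  have hs : 0 < Real.sin t := Real.sin_pos_of_pos_of_lt_pi h0 hπ
  rcases lt_or_ge t (π / 2) with h | h
  · have hc : 0 < Real.cos t := Real.cos_pos_of_mem_Ioo ⟨by linarith [Real.pi_pos], h⟩
    have := Real.lt_tan h0 h
    rw [Real.tan_eq_sin_div_cos] at this
    have : t * Real.cos t < Real.sin t := by
      rw [← lt_div_iff₀ hc]; exact this
    linarith
  · have hc : Real.cos t ≤ 0 := Real.cos_nonpos_of_pi_div_two_le_of_le h (by linarith [Real.pi_pos])
    nlinarith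

private lemma g_hasDerivAt {t : ℝ} (ht : t ∈ Set.Ioo 0 π) :
    HasDerivAt (fun u => u / Real.sin u)
      ((Real.sin t - t * Real.cos t) / (Real.sin t) ^ 2) t := by
  have hs : Real.sin t ≠ 0 := (Real.sin_pos_of_pos_of_lt_pi ht.1 ht.2).ne'
  have := (hasDerivAt_id t).div (Real.hasDerivAt_sin t) hs
  exact this.congr_deriv (by simp)

private lemma g_strictMono : StrictMonoOn (fun u => u / Real.sin u) (Set.Ioo 0 π) := by
  apply strictMonoOn_of_deriv_pos (convex_Ioo 0 π)
  · intro t ht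
    exact ((g_hasDerivAt ht).continuousAt).continuousWithinAt
  · intro t ht
    rw [interior_Ioo] at ht
    rw [(g_hasDerivAt ht).deriv]
    have hs : 0 < Real.sin t := Real.sin_pos_of_pos_of_lt_pi ht.1 ht.2
    exact div_pos (sincos_pos ht) (by positivity)

theorem A_deriv_and_strictMono (θ A : ℝ → ℝ)
    (hmem : ∀ ℓ ∈ Set.Ioi (1:ℝ), θ ℓ ∈ Set.Ioo 0 π)
    (heq : ∀ ℓ ∈ Set.Ioi (1:ℝ), ℓ = θ ℓ / Real.sin (θ ℓ))
    (hA : ∀ ℓ ∈ Set.Ioi (1:ℝ),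
      A ℓ = π ^ 2 * (2 * θ ℓ - Real.sin (2 * θ ℓ)) / (1 - Real.cos (2 * θ ℓ))) :
    (∀ ℓ ∈ Set.Ioi (1:ℝ), HasDerivAt A (2 * π ^ 2 / Real.sin (θ ℓ)) ℓ) ∧
    StrictMonoOn A (Set.Ioi 1) ∧
    (∀ ℓ ∈ Set.Ioi (1:ℝ), ℓ ≠ π / 2 → 2 * π ^ 2 < 2 * π ^ 2 / Real.sin (θ ℓ)) := by
  set g : ℝ → ℝ := fun u => u / Real.sin u with hg
  have hgθ : ∀ ℓ ∈ Set.Ioi (1:ℝ), g (θ ℓ) = ℓ := fun ℓ hℓ => (heq ℓ hℓ).symm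
  -- θ is strictly monotone on Ioi 1
  have hθmono : StrictMonoOn θ (Set.Ioi 1) := by
    intro a ha b hb hab
    by_contra h
    push_neg at h
    have := g_strictMono.monotoneOn (hmem b hb) (hmem a ha) h
    have ha' := hgθ a ha
    have hb' := hgθ b hb
    simp only [hg] at ha' hb'
    rw [ha', hb'] at this
    linarith
  -- image of θ is Ioo 0 π
  have himg : θ '' Set.Ioi 1 = Set.Ioo 0 π := by
    apply Set.Subset.antisymm
    · rintro _ ⟨ℓ, hℓ, rfl⟩; exact hmem ℓ hℓ
    · intro t ht
      have hs : 0 < Real.sin t := Real.sin_pos_of_pos_of_lt_pi ht.1 ht.2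
      have hgt : g t ∈ Set.Ioi (1:ℝ) := by
        have : Real.sin t < t := Real.sin_lt ht.1
        simp only [hg, Set.mem_Ioi]
        rw [lt_div_iff₀ hs]; linarith
      refine ⟨g t, hgt, ?_⟩
      have : g (θ (g t)) = g t := hgθ _ hgt
      exact g_strictMono.injOn (hmem _ hgt) ht this
  -- θ is continuous on Ioi 1
  have hθcont : ∀ ℓ ∈ Set.Ioi (1:ℝ), ContinuousAt θ ℓ := by
    intro ℓ hℓ
    apply hθmono.continuousAt_of_image_mem_nhds (Ioi_mem_nhds hℓ)
    rw [himg]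
    exact Ioo_mem_nhds (hmem ℓ hℓ).1 (hmem ℓ hℓ).2
  -- θ is differentiable
  have hθderiv : ∀ ℓ ∈ Set.Ioi (1:ℝ), HasDerivAt θ
      (((Real.sin (θ ℓ) - θ ℓ * Real.cos (θ ℓ)) / (Real.sin (θ ℓ)) ^ 2)⁻¹) ℓ := by
    intro ℓ hℓ
    have ht := hmem ℓ hℓ
    have hs : 0 < Real.sin (θ ℓ) := Real.sin_pos_of_pos_of_lt_pi ht.1 ht.2
    refine HasDerivAt.of_local_left_inverse (hθcont ℓ hℓ) (g_hasDerivAt ht) ?_ ?_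
    · exact (div_pos (sincos_pos ht) (by positivity)).ne'
    · filter_upwards [Ioi_mem_nhds hℓ] with y hy using hgθ y hy
  -- main derivative claim
  have hmain : ∀ ℓ ∈ Set.Ioi (1:ℝ), HasDerivAt A (2 * π ^ 2 / Real.sin (θ ℓ)) ℓ := by
    intro ℓ hℓ
    have ht := hmem ℓ hℓ
    have hs : 0 < Real.sin (θ ℓ) := Real.sin_pos_of_pos_of_lt_pi ht.1 ht.2
    set t := θ ℓ
    -- F : the explicit function of t
    set F : ℝ → ℝ := fun u => π ^ 2 * (2 * u - Real.sin (2 * u)) / (1 - Real.cos (2 * u)) with hF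
    have hden : 1 - Real.cos (2 * t) ≠ 0 := by
      have : Real.cos (2 * t) = 1 - 2 * Real.sin t ^ 2 := Real.cos_two_mul' t |>.symm ▸ ?_
      · nlinarith
      · rw [Real.cos_sq']; ring
    have hFd : HasDerivAt F
        ((π ^ 2 * (2 - Real.cos (2 * t) * 2) * (1 - Real.cos (2 * t))
          - π ^ 2 * (2 * t - Real.sin (2 * t)) * (Real.sin (2 * t) * 2))
          / (1 - Real.cos (2 * t)) ^ 2) t := by
      have h1 : HasDerivAt (fun u => π ^ 2 * (2 * u - Real.sin (2 * u)))
          (π ^ 2 * (2 - Real.cos (2 * t) * 2)) t := by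
        have hsin : HasDerivAt (fun u : ℝ => Real.sin (2 * u)) (Real.cos (2 * t) * 2) t := by
          have := (Real.hasDerivAt_sin (2 * t)).comp t ((hasDerivAt_id t).const_mul 2)
          exact this.congr_deriv (by simp)
        have := (((hasDerivAt_id t).const_mul 2).sub hsin).const_mul (π ^ 2)
        simpa using this
      have h2 : HasDerivAt (fun u => 1 - Real.cos (2 * u)) (Real.sin (2 * t) * 2) t := by
        have hcos : HasDerivAt (fun u : ℝ => Real.cos (2 * u)) (-Real.sin (2 * t) * 2) t := by
          have := (Real.hasDerivAt_cos (2 * t)).comp t ((hasDerivAt_id t).const_mul 2)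
          exact this.congr_deriv (by simp)
        have := (hasDerivAt_const t (1:ℝ)).sub hcos
        exact this.congr_deriv (by simp)
      exact h1.div h2 hden
    have hcomp := hFd.comp ℓ (hθderiv ℓ hℓ)
    have hAeq : A =ᶠ[nhds ℓ] F ∘ θ := by
      filter_upwards [Ioi_mem_nhds hℓ] with y hy using hA y hy
    have hval : ((π ^ 2 * (2 - Real.cos (2 * t) * 2) * (1 - Real.cos (2 * t))
          - π ^ 2 * (2 * t - Real.sin (2 * t)) * (Real.sin (2 * t) * 2))
          / (1 - Real.cos (2 * t)) ^ 2)
          * ((Real.sin t - t * Real.cos t) / Real.sin t ^ 2)⁻¹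
          = 2 * π ^ 2 / Real.sin t := by
      have hc2 : Real.cos (2 * t) = 1 - 2 * Real.sin t ^ 2 := by
        rw [Real.cos_two_mul]; nlinarith [Real.sin_sq_add_cos_sq t]
      have hs2 : Real.sin (2 * t) = 2 * Real.sin t * Real.cos t := Real.sin_two_mul t
      have hnum : Real.sin t - t * Real.cos t ≠ 0 := (sincos_pos ht).ne'
      rw [hc2, hs2]
      field_simp
      ring_nf
      linear_combination (4 * Real.sin t ^ 5) * Real.sin_sq_add_cos_sq t
    rw [hval] at hcomp
    exact hcomp.congr_of_eventuallyEq hAeq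
  refine ⟨hmain, ?_, ?_⟩
  · -- strict monotonicity
    apply strictMonoOn_of_deriv_pos (convex_Ioi 1)
    · intro ℓ hℓ
      exact (hmain ℓ hℓ).continuousAt.continuousWithinAt
    · intro ℓ hℓ
      rw [interior_Ioi] at hℓ
      rw [(hmain ℓ hℓ).deriv]
      have ht := hmem ℓ hℓ
      have hs : 0 < Real.sin (θ ℓ) := Real.sin_pos_of_pos_of_lt_pi ht.1 ht.2
      positivity
  · intro ℓ hℓ hne
    have ht := hmem ℓ hℓ
    have hs : 0 < Real.sin (θ ℓ) := Real.sin_pos_of_pos_of_lt_pi ht.1 ht.2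
    have hlt : Real.sin (θ ℓ) < 1 := by
      rcases lt_or_eq_of_le (Real.sin_le_one (θ ℓ)) with h | h
      · exact h
      · exfalso
        have hc : Real.cos (θ ℓ) = 0 := by nlinarith [Real.sin_sq_add_cos_sq (θ ℓ)]
        have hmem2 : π / 2 ∈ Set.Icc 0 π := ⟨by positivity, by linarith [Real.pi_pos]⟩
        have this2 : θ ℓ = π / 2 :=
          Real.injOn_cos ⟨le_of_lt ht.1, le_of_lt ht.2⟩ hmem2
            (by rw [Real.cos_pi_div_two]; exact hc)
        apply hne
        rw [heq ℓ hℓ, this2, Real.sin_pi_div_two, div_one]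
    calc 2 * π ^ 2 = 2 * π ^ 2 / 1 := by ring
    _ < 2 * π ^ 2 / Real.sin (θ ℓ) := by
        apply div_lt_div_of_pos_left _ hs hlt
        positivity
end

section
/- With A(ℓ) := π² (2θ(ℓ) − sin(2θ(ℓ)))/(1 − cos(2θ(ℓ))) and θ(ℓ) defined by ℓ = θ(ℓ)/sin θ(ℓ), θ(ℓ) ∈ (0,π), the function ℓ ↦ A(ℓ)/√(ℓ−1) is increasing on (1, ∞). -/
open Real Set

private lemma aux_ineq1 {t : ℝ} (ht : t ∈ Set.Ioo (0:ℝ) π) :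
    0 < 3 * t - 4 * Real.sin t + Real.sin t * Real.cos t := by
  have hmono : StrictMonoOn (fun t => 3 * t - 4 * Real.sin t + Real.sin t * Real.cos t)
      (Set.Icc 0 π) := by
    apply strictMonoOn_of_deriv_pos (convex_Icc 0 π)
    · fun_prop
    · intro x hx
      rw [interior_Icc] at hx
      have hd : HasDerivAt (fun t : ℝ => 3 * t - 4 * Real.sin t + Real.sin t * Real.cos t)
          (3 * 1 - 4 * Real.cos x + (Real.cos x * Real.cos x + Real.sin x * (-Real.sin x))) x :=
        (((hasDerivAt_id x).const_mul 3).sub ((Real.hasDerivAt_sin x).const_mul 4)).add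
          ((Real.hasDerivAt_sin x).mul (Real.hasDerivAt_cos x))
      rw [hd.deriv]
      have hc : Real.cos x < 1 := by
        have := Real.cos_lt_cos_of_nonneg_of_le_pi le_rfl hx.2.le hx.1
        simpa using this
      nlinarith [Real.sin_sq_add_cos_sq x]
  have h0 : (fun t => 3 * t - 4 * Real.sin t + Real.sin t * Real.cos t) 0 = 0 := by simp
  have := hmono (Set.left_mem_Icc.mpr Real.pi_pos.le)
    (Set.mem_Icc.mpr ⟨ht.1.le, ht.2.le⟩) ht.1
  rw [h0] at this
  exact this

private lemma aux_ineq2 {t : ℝ} (ht : t ∈ Set.Ioo (0:ℝ) π) :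
    0 < Real.sin t - t * Real.cos t := by
  have hmono : StrictMonoOn (fun t => Real.sin t - t * Real.cos t) (Set.Icc 0 π) := by
    apply strictMonoOn_of_deriv_pos (convex_Icc 0 π)
    · fun_prop
    · intro x hx
      rw [interior_Icc] at hx
      have hd : HasDerivAt (fun t : ℝ => Real.sin t - t * Real.cos t)
          (Real.cos x - (1 * Real.cos x + x * (-Real.sin x))) x :=
        (Real.hasDerivAt_sin x).sub ((hasDerivAt_id x).mul (Real.hasDerivAt_cos x))
      rw [hd.deriv]
      have hs : 0 < Real.sin x := Real.sin_pos_of_pos_of_lt_pi hx.1 hx.2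
      nlinarith [mul_pos hx.1 hs]
  have h0 : (fun t => Real.sin t - t * Real.cos t) 0 = 0 := by simp
  have := hmono (Set.left_mem_Icc.mpr Real.pi_pos.le)
    (Set.mem_Icc.mpr ⟨ht.1.le, ht.2.le⟩) ht.1
  rw [h0] at this
  exact this

private lemma aux_tmono : StrictMonoOn (fun t => t / Real.sin t) (Set.Ioo (0:ℝ) π) := by
  apply strictMonoOn_of_deriv_pos (convex_Ioo 0 π)
  · exact ContinuousOn.div continuousOn_id Real.continuousOn_sin
      (fun x hx => (Real.sin_pos_of_pos_of_lt_pi hx.1 hx.2).ne')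
  · intro x hx
    rw [interior_Ioo] at hx
    have hs : 0 < Real.sin x := Real.sin_pos_of_pos_of_lt_pi hx.1 hx.2
    have hd : HasDerivAt (fun t : ℝ => t / Real.sin t)
        ((1 * Real.sin x - x * Real.cos x) / Real.sin x ^ 2) x :=
      (hasDerivAt_id x).div (Real.hasDerivAt_sin x) hs.ne'
    rw [hd.deriv]
    apply div_pos _ (pow_pos hs 2)
    have := aux_ineq2 hx
    linarith

private lemma aux_Pmono : StrictMonoOn
    (fun t => (t - Real.sin t * Real.cos t) ^ 2 / (Real.sin t ^ 3 * (t - Real.sin t)))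
    (Set.Ioo (0:ℝ) π) := by
  apply strictMonoOn_of_deriv_pos (convex_Ioo 0 π)
  · apply ContinuousOn.div (by fun_prop) (by fun_prop)
    intro x hx
    have hs : 0 < Real.sin x := Real.sin_pos_of_pos_of_lt_pi hx.1 hx.2
    exact (mul_pos (pow_pos hs 3) (sub_pos.mpr (Real.sin_lt hx.1))).ne'
  · intro x hx
    rw [interior_Ioo] at hx
    have hs : 0 < Real.sin x := Real.sin_pos_of_pos_of_lt_pi hx.1 hx.2
    have hts : Real.sin x < x := Real.sin_lt hx.1
    have hD : 0 < Real.sin x ^ 3 * (x - Real.sin x) :=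
      mul_pos (pow_pos hs 3) (sub_pos.mpr hts)
    have hnum : HasDerivAt (fun t : ℝ => (t - Real.sin t * Real.cos t) ^ 2)
        ((2:ℕ) * (x - Real.sin x * Real.cos x) ^ 1 *
          (1 - (Real.cos x * Real.cos x + Real.sin x * (-Real.sin x)))) x :=
      ((hasDerivAt_id x).sub ((Real.hasDerivAt_sin x).mul (Real.hasDerivAt_cos x))).pow 2
    have hden : HasDerivAt (fun t : ℝ => Real.sin t ^ 3 * (t - Real.sin t))
        ((3:ℕ) * Real.sin x ^ 2 * Real.cos x * (x - Real.sin x) +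
          Real.sin x ^ 3 * (1 - Real.cos x)) x :=
      ((Real.hasDerivAt_sin x).pow 3).mul ((hasDerivAt_id x).sub (Real.hasDerivAt_sin x))
    have hd : HasDerivAt (fun t : ℝ => (t - Real.sin t * Real.cos t) ^ 2 / (Real.sin t ^ 3 * (t - Real.sin t))) _ x :=
      hnum.div hden hD.ne'
    rw [hd.deriv]
    apply div_pos _ (pow_pos hD 2)
    have pyth : Real.sin x ^ 2 + Real.cos x ^ 2 = 1 := Real.sin_sq_add_cos_sq x
    have hN : 0 < x - Real.sin x * Real.cos x := by
      nlinarith [Real.cos_le_one x]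
    have hE1 : 0 < 3 * x - 4 * Real.sin x + Real.sin x * Real.cos x := aux_ineq1 hx
    have hE2 : 0 < Real.sin x - x * Real.cos x := aux_ineq2 hx
    have hid : (2:ℕ) * (x - Real.sin x * Real.cos x) ^ 1 *
          (1 - (Real.cos x * Real.cos x + Real.sin x * (-Real.sin x))) *
          (Real.sin x ^ 3 * (x - Real.sin x)) -
        (x - Real.sin x * Real.cos x) ^ 2 *
          ((3:ℕ) * Real.sin x ^ 2 * Real.cos x * (x - Real.sin x) +
            Real.sin x ^ 3 * (1 - Real.cos x)) =
        (x - Real.sin x * Real.cos x) * Real.sin x ^ 2 *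
          ((3 * x - 4 * Real.sin x + Real.sin x * Real.cos x) *
            (Real.sin x - x * Real.cos x)) := by
      push_cast
      linear_combination (2 * Real.sin x ^ 3 * (x - Real.sin x) *
        (x - Real.sin x * Real.cos x)) * pyth
    rw [hid]
    exact mul_pos (mul_pos hN (pow_pos hs 2)) (mul_pos hE1 hE2)

theorem A_div_sqrt_increasing (θ A : ℝ → ℝ)
    (hmem : ∀ ℓ ∈ Set.Ioi (1:ℝ), θ ℓ ∈ Set.Ioo 0 π)
    (heq : ∀ ℓ ∈ Set.Ioi (1:ℝ), ℓ = θ ℓ / Real.sin (θ ℓ))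
    (hA : ∀ ℓ ∈ Set.Ioi (1:ℝ),
      A ℓ = π ^ 2 * (2 * θ ℓ - Real.sin (2 * θ ℓ)) / (1 - Real.cos (2 * θ ℓ))) :
    StrictMonoOn (fun ℓ => A ℓ / Real.sqrt (ℓ - 1)) (Set.Ioi 1) := by
  -- key facts for each ℓ
  have key : ∀ ℓ ∈ Set.Ioi (1:ℝ),
      0 < A ℓ / Real.sqrt (ℓ - 1) ∧
      (A ℓ / Real.sqrt (ℓ - 1)) ^ 2 = π ^ 4 *
        ((θ ℓ - Real.sin (θ ℓ) * Real.cos (θ ℓ)) ^ 2 /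
          (Real.sin (θ ℓ) ^ 3 * (θ ℓ - Real.sin (θ ℓ)))) := by
    intro ℓ hℓ
    have hℓ1 : (1:ℝ) < ℓ := hℓ
    have ht := hmem ℓ hℓ
    set t := θ ℓ with htdef
    have hs : 0 < Real.sin t := Real.sin_pos_of_pos_of_lt_pi ht.1 ht.2
    have hts : Real.sin t < t := Real.sin_lt ht.1
    have pyth : Real.sin t ^ 2 + Real.cos t ^ 2 = 1 := Real.sin_sq_add_cos_sq t
    have hN : 0 < t - Real.sin t * Real.cos t := by nlinarith [Real.cos_le_one t]
    have hAval : A ℓ = π ^ 2 * (t - Real.sin t * Real.cos t) / Real.sin t ^ 2 := by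
      rw [hA ℓ hℓ, Real.sin_two_mul, Real.cos_two_mul]
      rw [show (1:ℝ) - (2 * Real.cos t ^ 2 - 1) = 2 * Real.sin t ^ 2 by nlinarith]
      field_simp
      ring
    have hApos : 0 < A ℓ := by
      rw [hAval]
      exact div_pos (mul_pos (pow_pos Real.pi_pos 2) hN) (pow_pos hs 2)
    have hu : 0 < ℓ - 1 := by linarith
    have hsqrt : 0 < Real.sqrt (ℓ - 1) := Real.sqrt_pos.mpr hu
    refine ⟨div_pos hApos hsqrt, ?_⟩
    have hsq : Real.sqrt (ℓ - 1) ^ 2 = ℓ - 1 := Real.sq_sqrt hu.le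
    have hℓval : ℓ - 1 = (t - Real.sin t) / Real.sin t := by
      rw [heq ℓ hℓ]
      field_simp
      rw [← htdef, sub_mul, div_mul_cancel₀ _ hs.ne', one_mul]
    rw [div_pow, hsq, hℓval, hAval]
    have h1 : Real.sin t ≠ 0 := hs.ne'
    have h2 : t - Real.sin t ≠ 0 := (sub_pos.mpr hts).ne'
    field_simp
  intro a ha b hb hab
  have hta := hmem a ha
  have htb := hmem b hb
  have htlt : θ a < θ b := by
    refine (aux_tmono.lt_iff_lt hta htb).mp ?_
    show θ a / Real.sin (θ a) < θ b / Real.sin (θ b)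
    rw [← heq a ha, ← heq b hb]
    exact hab
  have hP := aux_Pmono hta htb htlt
  obtain ⟨hpa, hqa⟩ := key a ha
  obtain ⟨hpb, hqb⟩ := key b hb
  have hsq : (A a / Real.sqrt (a - 1)) ^ 2 < (A b / Real.sqrt (b - 1)) ^ 2 := by
    rw [hqa, hqb]
    exact mul_lt_mul_of_pos_left hP (by positivity)
  exact lt_of_pow_lt_pow_left₀ 2 hpb.le hsq
end

section
/- With A(ℓ) as above, lim_{ℓ→1⁺} A(ℓ)/√(ℓ−1) = 2√(2/3) π² and lim_{ℓ→∞} A(ℓ)/ℓ² = π. -/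
open Real Set Filter Topology

lemma aux_sin_sub_pos {t : ℝ} (h0 : 0 < t) (hπ : t < π) :
    0 < Real.sin t - t * Real.cos t := by
  have H : StrictMonoOn (fun t => Real.sin t - t * Real.cos t) (Icc 0 π) := by
    apply strictMonoOn_of_deriv_pos (convex_Icc 0 π)
    · fun_prop
    · intro x hx
      rw [interior_Icc] at hx
      have hd : HasDerivAt (fun t => Real.sin t - t * Real.cos t) (x * Real.sin x) x := by
        have h2 := (hasDerivAt_id' x).mul (Real.hasDerivAt_cos x)
        exact ((Real.hasDerivAt_sin x).sub h2).congr_deriv (by ring)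
      rw [hd.deriv]
      exact mul_pos hx.1 (Real.sin_pos_of_pos_of_lt_pi hx.1 hx.2)
  have := H (by constructor <;> [rfl; positivity]) ⟨h0.le, hπ.le⟩ h0
  simpa using this

lemma aux_mono : StrictMonoOn (fun t => t / Real.sin t) (Ioo 0 π) := by
  apply strictMonoOn_of_deriv_pos (convex_Ioo 0 π)
  · exact ContinuousOn.div continuousOn_id Real.continuous_sin.continuousOn
      (fun x hx => ne_of_gt (Real.sin_pos_of_pos_of_lt_pi hx.1 hx.2))
  · intro x hx
    rw [interior_Ioo] at hx
    have hs := Real.sin_pos_of_pos_of_lt_pi hx.1 hx.2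
    have hd : HasDerivAt (fun t => t / Real.sin t)
        ((1 * Real.sin x - x * Real.cos x) / Real.sin x ^ 2) x :=
      (hasDerivAt_id x).div (Real.hasDerivAt_sin x) (ne_of_gt hs)
    rw [hd.deriv, one_mul]
    exact div_pos (aux_sin_sub_pos hx.1 hx.2) (by positivity)

lemma theta_lim_zero (θ : ℝ → ℝ)
    (hmem : ∀ ℓ ∈ Set.Ioi (1:ℝ), θ ℓ ∈ Set.Ioo 0 π)
    (heq : ∀ ℓ ∈ Set.Ioi (1:ℝ), ℓ = θ ℓ / Real.sin (θ ℓ)) :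
    Tendsto θ (𝓝[>] 1) (𝓝[>] 0) := by
  rw [tendsto_nhdsWithin_iff]
  constructor
  · rw [tendsto_order]
    constructor
    · intro a ha
      filter_upwards [self_mem_nhdsWithin] with ℓ hℓ
      exact lt_trans ha (hmem ℓ hℓ).1
    · intro b hb
      set ε := min b (π/2) with hε
      have hε0 : 0 < ε := lt_min hb (by positivity)
      have hεπ : ε < π := lt_of_le_of_lt (min_le_right _ _)
        (by linarith [Real.pi_pos])
      have hM : 1 < ε / Real.sin ε := by
        rw [lt_div_iff₀ (Real.sin_pos_of_pos_of_lt_pi hε0 hεπ), one_mul]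
        exact Real.sin_lt hε0
      filter_upwards [Ioo_mem_nhdsGT_of_mem (by constructor <;> [rfl; exact hM]),
        self_mem_nhdsWithin] with ℓ hℓo hℓ
      by_contra h
      push_neg at h
      have hεb : ε ≤ θ ℓ := le_trans (min_le_left _ _) h
      have := aux_mono.monotoneOn ⟨hε0, hεπ⟩ (hmem ℓ hℓ) hεb
      rw [← heq ℓ hℓ] at this
      exact absurd hℓo.2 (not_lt.mpr this)
  · filter_upwards [self_mem_nhdsWithin] with ℓ hℓ
    exact (hmem ℓ hℓ).1

lemma theta_lim_pi (θ : ℝ → ℝ)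
    (hmem : ∀ ℓ ∈ Set.Ioi (1:ℝ), θ ℓ ∈ Set.Ioo 0 π)
    (heq : ∀ ℓ ∈ Set.Ioi (1:ℝ), ℓ = θ ℓ / Real.sin (θ ℓ)) :
    Tendsto θ atTop (𝓝 π) := by
  rw [tendsto_order]
  constructor
  · intro a ha
    set ε := max a (π/2) with hε
    have hε0 : 0 < ε := lt_of_lt_of_le (by positivity) (le_max_right _ _)
    have hεπ : ε < π := max_lt ha (by linarith [Real.pi_pos])
    filter_upwards [eventually_gt_atTop (max (ε / Real.sin ε) 1)] with ℓ hℓ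
    have hℓ1 : ℓ ∈ Set.Ioi (1:ℝ) := lt_of_le_of_lt (le_max_right _ _) hℓ
    by_contra h
    push_neg at h
    have hθε : θ ℓ ≤ ε := le_trans h (le_max_left _ _)
    have := aux_mono.monotoneOn (hmem ℓ hℓ1) ⟨hε0, hεπ⟩ hθε
    rw [← heq ℓ hℓ1] at this
    exact absurd (lt_of_le_of_lt (le_max_left (ε / Real.sin ε) 1) hℓ) (not_lt.mpr this)
  · intro b hb
    filter_upwards [eventually_gt_atTop (1:ℝ)] with ℓ hℓ
    exact lt_trans (hmem ℓ hℓ).2 hb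

lemma lim_s : Tendsto (fun t : ℝ => (t - Real.sin t) / t ^ 3) (𝓝[≠] 0) (𝓝 (1/6)) := by
  have hb : Tendsto (fun t : ℝ => |t| * (5/96)) (𝓝[≠] 0) (𝓝 0) := by
    have : Tendsto (fun t : ℝ => |t| * (5/96)) (𝓝 0) (𝓝 (|(0:ℝ)| * (5/96))) :=
      ((continuous_abs.mul continuous_const).tendsto 0)
    simpa using this.mono_left nhdsWithin_le_nhds
  have key : Tendsto (fun t : ℝ => (t - Real.sin t) / t ^ 3 - 1/6) (𝓝[≠] 0) (𝓝 0) := by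
    apply squeeze_zero_norm' _ hb
    have h1 : Metric.ball (0:ℝ) 1 ∩ {(0:ℝ)}ᶜ ∈ 𝓝[≠] (0:ℝ) :=
      inter_mem (nhdsWithin_le_nhds (Metric.ball_mem_nhds 0 one_pos)) self_mem_nhdsWithin
    filter_upwards [h1] with t ht
    have ht0 : t ≠ 0 := ht.2
    have ht1 : |t| ≤ 1 := le_of_lt (by simpa [Real.dist_eq] using ht.1)
    have hsb := Real.sin_bound ht1
    have heq : (t - Real.sin t) / t ^ 3 - 1/6 = -((Real.sin t - (t - t^3/6)) / t^3) := by
      field_simp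
      ring
    rw [heq, norm_neg, norm_div]
    rw [div_le_iff₀ (norm_pos_iff.mpr (pow_ne_zero 3 ht0))]
    calc ‖Real.sin t - (t - t^3/6)‖ ≤ |t| ^ 4 * (5/96) := by
          rw [Real.norm_eq_abs]; refine hsb.trans ?_
          have h4 : (0:ℝ) ≤ |t| ^ 4 := by positivity
          nlinarith [mul_le_mul_of_nonneg_left ht1 h4]
      _ = |t| * (5/96) * ‖t^3‖ := by
          rw [norm_pow]
          simp only [Real.norm_eq_abs]
          ring
  have := key.add tendsto_const_nhds (b := 1/6)
  simpa using this

lemma lim_c : Tendsto (fun t : ℝ => (1 - Real.cos t) / t ^ 2) (𝓝[≠] 0) (𝓝 (1/2)) := by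
  have hb : Tendsto (fun t : ℝ => |t| ^ 2 * (5/96)) (𝓝[≠] 0) (𝓝 0) := by
    have : Tendsto (fun t : ℝ => |t| ^ 2 * (5/96)) (𝓝 0) (𝓝 (|(0:ℝ)| ^ 2 * (5/96))) :=
      (((continuous_abs.pow 2).mul continuous_const).tendsto 0)
    simpa using this.mono_left nhdsWithin_le_nhds
  have key : Tendsto (fun t : ℝ => (1 - Real.cos t) / t ^ 2 - 1/2) (𝓝[≠] 0) (𝓝 0) := by
    apply squeeze_zero_norm' _ hb
    have h1 : Metric.ball (0:ℝ) 1 ∩ {(0:ℝ)}ᶜ ∈ 𝓝[≠] (0:ℝ) :=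
      inter_mem (nhdsWithin_le_nhds (Metric.ball_mem_nhds 0 one_pos)) self_mem_nhdsWithin
    filter_upwards [h1] with t ht
    have ht0 : t ≠ 0 := ht.2
    have ht1 : |t| ≤ 1 := le_of_lt (by simpa [Real.dist_eq] using ht.1)
    have hcb := Real.cos_bound ht1
    have heq : (1 - Real.cos t) / t ^ 2 - 1/2 = -((Real.cos t - (1 - t^2/2)) / t^2) := by
      field_simp
      ring
    rw [heq, norm_neg, norm_div]
    rw [div_le_iff₀ (norm_pos_iff.mpr (pow_ne_zero 2 ht0))]
    calc ‖Real.cos t - (1 - t^2/2)‖ ≤ |t| ^ 4 * (5/96) := by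
          rw [Real.norm_eq_abs]; refine hcb.trans ?_
          have h4 : (0:ℝ) ≤ |t| ^ 4 := by positivity
          nlinarith [mul_le_mul_of_nonneg_left ht1 h4]
      _ = |t| ^ 2 * (5/96) * ‖t^2‖ := by
          rw [norm_pow]
          simp only [Real.norm_eq_abs]
          ring
  have := key.add tendsto_const_nhds (b := 1/2)
  simpa using this

lemma lim_div_sin : Tendsto (fun t : ℝ => t / Real.sin t) (𝓝[≠] 0) (𝓝 1) := by
  have h := Real.hasDerivAt_sin 0
  rw [hasDerivAt_iff_tendsto_slope] at h
  have h2 : Tendsto (fun t : ℝ => Real.sin t / t) (𝓝[≠] 0) (𝓝 1) := by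
    have := h
    simp only [slope_fun_def, vsub_eq_sub, smul_eq_mul, Real.sin_zero, Real.cos_zero, sub_zero] at this
    exact this.congr (fun t => by rw [div_eq_mul_inv, mul_comm])
  have := h2.inv₀ one_ne_zero
  simpa [inv_div] using this


noncomputable def Ffun : ℝ → ℝ := fun t =>
  2 * π ^ 2 * ((2*t - Real.sin (2*t)) / (2*t) ^ 3) /
    (((1 - Real.cos (2*t)) / (2*t) ^ 2) *
      Real.sqrt (((t - Real.sin t) / t ^ 3) * (t / Real.sin t)))

noncomputable def Gfun : ℝ → ℝ := fun t =>
  π ^ 2 * (2*t - Real.sin (2*t)) / (2 * t ^ 2)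

lemma lim_F : Tendsto Ffun (𝓝[>] 0) (𝓝 (2 * Real.sqrt (2/3) * π ^ 2)) := by
  have hmono : (𝓝[>] (0:ℝ)) ≤ 𝓝[≠] 0 :=
    nhdsWithin_mono 0 (fun x hx => ne_of_gt hx)
  have h20 : Tendsto (fun t : ℝ => 2 * t) (𝓝[>] 0) (𝓝[≠] 0) := by
    rw [tendsto_nhdsWithin_iff]
    constructor
    · have : Tendsto (fun t : ℝ => 2 * t) (𝓝 0) (𝓝 (2 * 0)) :=
        (continuous_const.mul continuous_id).tendsto 0
      simpa using this.mono_left nhdsWithin_le_nhds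
    · filter_upwards [self_mem_nhdsWithin] with t ht
      have : (0:ℝ) < t := ht
      simp only [mem_compl_iff, mem_singleton_iff]
      positivity
  have hs2 : Tendsto (fun t : ℝ => (2*t - Real.sin (2*t)) / (2*t) ^ 3) (𝓝[>] 0) (𝓝 (1/6)) :=
    lim_s.comp h20
  have hc2 : Tendsto (fun t : ℝ => (1 - Real.cos (2*t)) / (2*t) ^ 2) (𝓝[>] 0) (𝓝 (1/2)) :=
    lim_c.comp h20
  have hinner : Tendsto (fun t : ℝ => ((t - Real.sin t) / t ^ 3) * (t / Real.sin t))
      (𝓝[>] 0) (𝓝 (1/6)) := by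
    have := (lim_s.mono_left hmono).mul (lim_div_sin.mono_left hmono)
    simpa using this
  have hsqrt : Tendsto (fun t : ℝ =>
      Real.sqrt (((t - Real.sin t) / t ^ 3) * (t / Real.sin t)))
      (𝓝[>] 0) (𝓝 (Real.sqrt (1/6))) :=
    (Real.continuous_sqrt.tendsto _).comp hinner
  have hsq6 : (0:ℝ) < Real.sqrt (1/6) := Real.sqrt_pos.mpr (by norm_num)
  have hden : Tendsto (fun t : ℝ => ((1 - Real.cos (2*t)) / (2*t) ^ 2) *
      Real.sqrt (((t - Real.sin t) / t ^ 3) * (t / Real.sin t)))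
      (𝓝[>] 0) (𝓝 (1/2 * Real.sqrt (1/6))) := hc2.mul hsqrt
  have hne : (1/2 : ℝ) * Real.sqrt (1/6) ≠ 0 := by positivity
  have hF := ((tendsto_const_nhds (x := 2 * π ^ 2)).mul hs2).div hden hne
  have hval : 2 * π ^ 2 * (1/6) / (1/2 * Real.sqrt (1/6))
      = 2 * Real.sqrt (2/3) * π ^ 2 := by
    have h36 : Real.sqrt (2/3) * Real.sqrt (1/6) = 1/3 := by
      rw [← Real.sqrt_mul (by norm_num)]
      rw [show (2/3 : ℝ) * (1/6) = (1/3)^2 by norm_num, Real.sqrt_sq (by norm_num)]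
    rw [div_eq_iff hne]
    nlinarith [h36]
  rw [← hval]
  exact hF

lemma lim_G : Tendsto Gfun (𝓝 π) (𝓝 π) := by
  have hc : ContinuousAt Gfun π := by
    apply ContinuousAt.div
    · fun_prop
    · fun_prop
    · have := Real.pi_pos
      positivity
  have hval : Gfun π = π := by
    unfold Gfun
    rw [Real.sin_two_pi]
    have := Real.pi_pos
    field_simp
    ring
  simpa [hval] using hc.tendsto

theorem A_asymptotics (θ A : ℝ → ℝ)
    (hmem : ∀ ℓ ∈ Set.Ioi (1:ℝ), θ ℓ ∈ Set.Ioo 0 π)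
    (heq : ∀ ℓ ∈ Set.Ioi (1:ℝ), ℓ = θ ℓ / Real.sin (θ ℓ))
    (hA : ∀ ℓ ∈ Set.Ioi (1:ℝ),
      A ℓ = π ^ 2 * (2 * θ ℓ - Real.sin (2 * θ ℓ)) / (1 - Real.cos (2 * θ ℓ))) :
    Filter.Tendsto (fun ℓ => A ℓ / Real.sqrt (ℓ - 1))
      (nhdsWithin 1 (Set.Ioi 1)) (nhds (2 * Real.sqrt (2 / 3) * π ^ 2)) ∧
    Filter.Tendsto (fun ℓ => A ℓ / ℓ ^ 2) Filter.atTop (nhds π) := by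
  constructor
  · have hcomp := lim_F.comp (theta_lim_zero θ hmem heq)
    apply hcomp.congr'
    filter_upwards [self_mem_nhdsWithin] with ℓ hℓ
    set t := θ ℓ with htdef
    obtain ⟨ht0, htπ⟩ := hmem ℓ hℓ
    have hsin : 0 < Real.sin t := Real.sin_pos_of_pos_of_lt_pi ht0 htπ
    have hℓeq := heq ℓ hℓ
    rw [← htdef] at ht0 htπ hℓeq
    have hℓ1 : (0:ℝ) < ℓ - 1 := by
      have : (1:ℝ) < ℓ := hℓ
      linarith
    have hcos : 1 - Real.cos (2*t) = 2 * Real.sin t ^ 2 := by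
      rw [Real.cos_two_mul']
      nlinarith [Real.sin_sq_add_cos_sq t]
    have hcosne : 1 - Real.cos (2*t) ≠ 0 := by rw [hcos]; positivity
    have hsqℓ : 0 < Real.sqrt (ℓ - 1) := Real.sqrt_pos.mpr hℓ1
    have hinner_eq : ((t - Real.sin t) / t ^ 3) * (t / Real.sin t) = (ℓ - 1) / t ^ 2 := by
      rw [hℓeq]
      field_simp
    have hsqeq : Real.sqrt (((t - Real.sin t) / t ^ 3) * (t / Real.sin t))
        = Real.sqrt (ℓ - 1) / t := by
      rw [hinner_eq, Real.sqrt_div hℓ1.le, Real.sqrt_sq ht0.le]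
    show Ffun t = A ℓ / Real.sqrt (ℓ - 1)
    rw [hA ℓ hℓ, ← htdef]
    unfold Ffun
    rw [hsqeq]
    field_simp
  · have hcomp := lim_G.comp (theta_lim_pi θ hmem heq)
    apply hcomp.congr'
    filter_upwards [eventually_gt_atTop (1:ℝ)] with ℓ hℓ
    set t := θ ℓ with htdef
    obtain ⟨ht0, htπ⟩ := hmem ℓ hℓ
    have hsin : 0 < Real.sin t := Real.sin_pos_of_pos_of_lt_pi ht0 htπ
    have hℓeq := heq ℓ hℓ
    rw [← htdef] at ht0 htπ hℓeq
    have hcos : 1 - Real.cos (2*t) = 2 * Real.sin t ^ 2 := by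
      rw [Real.cos_two_mul']
      nlinarith [Real.sin_sq_add_cos_sq t]
    show Gfun t = A ℓ / ℓ ^ 2
    rw [hA ℓ hℓ, ← htdef, hcos, hℓeq]
    unfold Gfun
    field_simp
end

section
/- With A(ℓ) as above, A(ℓ) ≤ 2π ℓ² for all ℓ > 1, and the maximum of A(ℓ)/ℓ² is attained at ℓ = π/2 with value A(π/2)/(π/2)² = 2π. -/
open Real Set

-- x(π−x) ≤ π sin x on [0, π/2]
lemma key0 {x : ℝ} (h0 : 0 ≤ x) (h1 : x ≤ π / 2) : x * (π - x) ≤ π * Real.sin x := by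
  have hpi1 : π > 3.141592 := Real.pi_gt_d6
  have hpi2 : π < 3.141593 := Real.pi_lt_d6
  rcases eq_or_lt_of_le h0 with h | hx0
  · simp [← h]
  rcases le_or_gt x 1 with hle1 | hgt1
  · -- cubic bound
    have hc : x - x ^ 3 / 4 < Real.sin x := by
      have := Real.sin_gt_sub_cube hx0; nlinarith [pow_pos hx0 3]
    have hc' : π * (x - x ^ 3 / 4) ≤ π * Real.sin x :=
      mul_le_mul_of_nonneg_left hc.le Real.pi_pos.le
    nlinarith [mul_nonneg (sq_nonneg x) (by nlinarith : (0:ℝ) ≤ 4 - π * x)]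
  rcases le_or_gt x (π - 2) with hle | hgt
  · -- 1 < x ≤ π − 2 : sin x ≥ sin 1 > 3/4
    have hs1 : Real.sin 1 > 3 / 4 := by
      have := Real.sin_gt_sub_cube one_pos
      norm_num at this ⊢; linarith
    have hmono : Real.sin 1 ≤ Real.sin x := by
      apply Real.sin_le_sin_of_le_of_le_pi_div_two (by linarith) h1 hgt1.le
    nlinarith
  · -- π − 2 < x ≤ π/2 : Jordan
    have hj := Real.mul_le_sin h0 h1
    rw [div_mul_eq_mul_div, div_le_iff₀ Real.pi_pos] at hj
    nlinarith [mul_nonneg h0 (by linarith : (0:ℝ) ≤ x - (π - 2))]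

-- x(π−x) ≤ π sin x on [0, π]
lemma key1 {x : ℝ} (h0 : 0 ≤ x) (h1 : x ≤ π) : x * (π - x) ≤ π * Real.sin x := by
  rcases le_or_gt x (π / 2) with h | h
  · exact key0 h0 h
  · have := key0 (x := π - x) (by linarith) (by linarith)
    rw [Real.sin_pi_sub] at this
    nlinarith

-- π (x − sin x) ≤ x² on [0, 2π]
lemma key2 {x : ℝ} (h0 : 0 ≤ x) (h1 : x ≤ 2 * π) : π * (x - Real.sin x) ≤ x ^ 2 := by
  rcases le_or_gt x π with h | h
  · have := key1 h0 h
    nlinarith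
  · have hs : Real.sin (x - π) ≤ x - π := Real.sin_le (by linarith)
    rw [Real.sin_sub_pi] at hs
    nlinarith [sq_nonneg (x - π), Real.pi_pos]

-- uniqueness: if t ∈ (0, π) and 2t = π sin t then t = π/2
lemma uniq {t : ℝ} (h0 : 0 < t) (h1 : t < π) (heq : 2 * t = π * Real.sin t) :
    t = π / 2 := by
  have hpi1 : π > 3.141592 := Real.pi_gt_d6
  have hpi2 : π < 3.141593 := Real.pi_lt_d6
  by_contra hne
  rcases lt_or_gt_of_ne hne with hlt | hgt
  · -- t < π/2 : π sin t > 2t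
    rcases lt_or_ge t (π - 2) with hc | hc
    · -- π sin t ≥ t(π−t) > 2t
      have := key1 h0.le h1.le
      nlinarith
    · -- use cos bound: sin t = cos(π/2 − t) ≥ 1 − (π/2−t)²/2
      have hcos : Real.sin t = Real.cos (π / 2 - t) := (Real.cos_pi_div_two_sub t).symm
      have hb : 1 - (π / 2 - t) ^ 2 / 2 ≤ Real.cos (π / 2 - t) :=
        Real.one_sub_sq_div_two_le_cos
      rw [hcos] at heq
      nlinarith
  · -- t > π/2 : π sin t ≤ π < 2t
    have := Real.sin_le_one t
    nlinarith

theorem A_le_two_pi_sq (θ A : ℝ → ℝ)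
    (hmem : ∀ ℓ ∈ Set.Ioi (1:ℝ), θ ℓ ∈ Set.Ioo 0 π)
    (heq : ∀ ℓ ∈ Set.Ioi (1:ℝ), ℓ = θ ℓ / Real.sin (θ ℓ))
    (hA : ∀ ℓ ∈ Set.Ioi (1:ℝ),
      A ℓ = π ^ 2 * (2 * θ ℓ - Real.sin (2 * θ ℓ)) / (1 - Real.cos (2 * θ ℓ))) :
    (∀ ℓ ∈ Set.Ioi (1:ℝ), A ℓ ≤ 2 * π * ℓ ^ 2) ∧
    (∀ ℓ ∈ Set.Ioi (1:ℝ), A ℓ / ℓ ^ 2 ≤ A (π / 2) / (π / 2) ^ 2) ∧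
    A (π / 2) / (π / 2) ^ 2 = 2 * π := by
  have hpi1 : π > 3.141592 := Real.pi_gt_d6
  have main : ∀ ℓ ∈ Set.Ioi (1:ℝ), A ℓ ≤ 2 * π * ℓ ^ 2 := by
    intro ℓ hl
    obtain ⟨ht0, ht1⟩ := hmem ℓ hl
    set t := θ ℓ with htdef
    have hs0 : 0 < Real.sin t := Real.sin_pos_of_pos_of_lt_pi ht0 ht1
    have hleq : ℓ = t / Real.sin t := heq ℓ hl
    have hcos2 : 1 - Real.cos (2 * t) = 2 * Real.sin t ^ 2 := by
      rw [Real.cos_two_mul']; ring_nf; nlinarith [Real.sin_sq_add_cos_sq t]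
    have hsin2 : Real.sin (2 * t) = 2 * Real.sin t * Real.cos t := Real.sin_two_mul t
    have hAeq : A ℓ = π ^ 2 * (2 * t - Real.sin (2 * t)) / (2 * Real.sin t ^ 2) := by
      rw [hA ℓ hl, hcos2]
    have hkey : π * (2 * t - Real.sin (2 * t)) ≤ (2 * t) ^ 2 :=
      key2 (by linarith) (by linarith)
    rw [hAeq, hleq, div_pow, ← mul_div_assoc,
      div_le_div_iff₀ (by positivity) (pow_pos hs0 2)]
    nlinarith [mul_nonneg Real.pi_pos.le (sq_nonneg (Real.sin t)), Real.pi_pos,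
      sq_nonneg (Real.sin t)]
  have hhalf : (π / 2 : ℝ) ∈ Set.Ioi (1:ℝ) := by
    simp only [Set.mem_Ioi]; linarith
  have hthalf : θ (π / 2) = π / 2 := by
    obtain ⟨ht0, ht1⟩ := hmem _ hhalf
    have hs0 : 0 < Real.sin (θ (π/2)) := Real.sin_pos_of_pos_of_lt_pi ht0 ht1
    have h := heq _ hhalf
    rw [eq_div_iff (ne_of_gt hs0)] at h
    exact uniq ht0 ht1 (by linarith)
  have hAval : A (π / 2) = π ^ 3 / 2 := by
    rw [hA _ hhalf, hthalf]
    have : 2 * (π / 2) = π := by ring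
    rw [this, Real.sin_pi, Real.cos_pi]
    ring
  have hlast : A (π / 2) / (π / 2) ^ 2 = 2 * π := by
    rw [hAval]
    field_simp
  refine ⟨main, ?_, hlast⟩
  intro ℓ hl
  have hl1 : (1:ℝ) < ℓ := hl
  rw [hlast, div_le_iff₀ (by positivity)]
  have := main ℓ hl
  linarith [main ℓ hl]
end

section
/- Suppose E : (0,∞) × ℝ → ℝ is C², even in its second argument (E(ν,μ) = E(ν,−μ)), strictly jointly convex, and satisfies the growth condition E(ν,μ) ≥ K₀(νʳ + ν⁻ˢ + |μ|ᵖ) − K₀' with r > 2, s > 0, p > 1, K₀ > 0. Define E⋆(t,σ) := t E(1/t, σ/t). Then for every σ ∈ ℝ, E⋆₁(t,σ) → −∞ as t → 0⁺ and E⋆₁(t,σ) → +∞ as t → +∞. -/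
open Real Set Filter Topology

/-- Partial derivative in the first variable. -/
noncomputable def D1 (f : ℝ → ℝ → ℝ) (ν μ : ℝ) : ℝ := deriv (fun x => f x μ) ν

/-- Partial derivative in the second variable. -/
noncomputable def D2 (f : ℝ → ℝ → ℝ) (ν μ : ℝ) : ℝ := deriv (fun y => f ν y) μ

/-- The transformed stored energy `E⋆(t,σ) = t E(1/t, σ/t)`. -/
noncomputable def Estar (E : ℝ → ℝ → ℝ) (t σ : ℝ) : ℝ := t * E (1 / t) (σ / t)

/-- Strict joint convexity expressed through positivity of the Hessian on `(0,∞) × ℝ`. -/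
def PosHess (E : ℝ → ℝ → ℝ) : Prop :=
  ∀ ν μ : ℝ, 0 < ν →
    0 < D1 (D1 E) ν μ ∧ 0 < D2 (D2 E) ν μ ∧
    0 < D1 (D1 E) ν μ * D2 (D2 E) ν μ - (D1 (D2 E) ν μ) ^ 2

theorem Estar1_limits (E : ℝ → ℝ → ℝ) (K₀ K₀' r s p : ℝ)
    (hE : ContDiffOn ℝ 2 (fun q : ℝ × ℝ => E q.1 q.2) (Set.Ioi 0 ×ˢ Set.univ))
    (heven : ∀ ν μ : ℝ, 0 < ν → E ν μ = E ν (-μ))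
    (hconv : PosHess E)
    (hK₀ : 0 < K₀) (hr : 2 < r) (hs : 0 < s) (hp : 1 < p)
    (hgrow : ∀ ν μ : ℝ, 0 < ν →
      K₀ * (ν ^ r + ν ^ (-s) + |μ| ^ p) - K₀' ≤ E ν μ) :
    ∀ σ : ℝ,
      Filter.Tendsto (fun t => D1 (Estar E) t σ) (nhdsWithin 0 (Set.Ioi 0)) Filter.atBot ∧
      Filter.Tendsto (fun t => D1 (Estar E) t σ) Filter.atTop Filter.atTop := by
  intro σ
  have hUopen : IsOpen (Set.Ioi (0:ℝ) ×ˢ (Set.univ : Set ℝ)) := isOpen_Ioi.prod isOpen_univ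
  set F : ℝ × ℝ → ℝ := fun q => E q.1 q.2 with hFdef
  have hCA : ∀ ν μ : ℝ, 0 < ν → ContDiffAt ℝ 2 F (ν, μ) := fun ν μ hν =>
    hE.contDiffAt (hUopen.mem_nhds ⟨hν, trivial⟩)
  have hFd : ∀ ν μ : ℝ, 0 < ν → DifferentiableAt ℝ F (ν, μ) :=
    fun ν μ hν => (hCA ν μ hν).differentiableAt two_ne_zero
  have hGcd : ContDiffOn ℝ 1 (fderiv ℝ F) (Set.Ioi 0 ×ˢ Set.univ) :=
    hE.fderiv_of_isOpen hUopen (by norm_num)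
  have hGd : ∀ ν μ : ℝ, 0 < ν → DifferentiableAt ℝ (fderiv ℝ F) (ν, μ) := fun ν μ hν =>
    (hGcd.differentiableOn one_ne_zero).differentiableAt (hUopen.mem_nhds ⟨hν, trivial⟩)
  have hline1 : ∀ μ ν : ℝ, HasDerivAt (fun x : ℝ => (x, μ)) ((1:ℝ), (0:ℝ)) ν := fun μ ν =>
    (hasDerivAt_id ν).prodMk (hasDerivAt_const ν μ)
  have hline2 : ∀ ν μ : ℝ, HasDerivAt (fun y : ℝ => (ν, y)) ((0:ℝ), (1:ℝ)) μ := fun ν μ =>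
    (hasDerivAt_const μ ν).prodMk (hasDerivAt_id μ)
  have hD1 : ∀ ν μ : ℝ, 0 < ν → HasDerivAt (fun x => E x μ) (fderiv ℝ F (ν, μ) (1, 0)) ν :=
    fun ν μ hν => by
      have h := (hFd ν μ hν).hasFDerivAt.comp_hasDerivAt ν (hline1 μ ν)
      exact h
  have hD2 : ∀ ν μ : ℝ, 0 < ν → HasDerivAt (fun y => E ν y) (fderiv ℝ F (ν, μ) (0, 1)) μ :=
    fun ν μ hν => (hFd ν μ hν).hasFDerivAt.comp_hasDerivAt μ (hline2 ν μ)
  have key : ∀ (w : ℝ × ℝ) (ν μ : ℝ), 0 < ν →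
      HasDerivAt (fun x => fderiv ℝ F (x, μ) w) (fderiv ℝ (fderiv ℝ F) (ν, μ) (1, 0) w) ν := by
    intro w ν μ hν
    have hcomp : HasDerivAt (fun x => fderiv ℝ F (x, μ)) (fderiv ℝ (fderiv ℝ F) (ν, μ) (1, 0)) ν :=
      (hGd ν μ hν).hasFDerivAt.comp_hasDerivAt ν (hline1 μ ν)
    simpa using hcomp.clm_apply (hasDerivAt_const ν w)
  have key2 : ∀ (w : ℝ × ℝ) (ν μ : ℝ), 0 < ν →
      HasDerivAt (fun y => fderiv ℝ F (ν, y) w) (fderiv ℝ (fderiv ℝ F) (ν, μ) (0, 1) w) μ := by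
    intro w ν μ hν
    have hcomp : HasDerivAt (fun y => fderiv ℝ F (ν, y)) (fderiv ℝ (fderiv ℝ F) (ν, μ) (0, 1)) μ :=
      (hGd ν μ hν).hasFDerivAt.comp_hasDerivAt μ (hline2 ν μ)
    simpa using hcomp.clm_apply (hasDerivAt_const μ w)
  have h11 : ∀ ν μ : ℝ, 0 < ν → D1 (D1 E) ν μ = fderiv ℝ (fderiv ℝ F) (ν, μ) (1, 0) (1, 0) := by
    intro ν μ hν
    have h := (key (1,0) ν μ hν).congr_of_eventuallyEq (f₁ := fun x => D1 E x μ) ?_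
    · exact h.deriv
    · filter_upwards [Ioi_mem_nhds hν] with x hx
      exact (hD1 x μ hx).deriv
  have h12 : ∀ ν μ : ℝ, 0 < ν → D1 (D2 E) ν μ = fderiv ℝ (fderiv ℝ F) (ν, μ) (1, 0) (0, 1) := by
    intro ν μ hν
    have h := (key (0,1) ν μ hν).congr_of_eventuallyEq (f₁ := fun x => D2 E x μ) ?_
    · exact h.deriv
    · filter_upwards [Ioi_mem_nhds hν] with x hx
      exact (hD2 x μ hx).deriv
  have h22 : ∀ ν μ : ℝ, 0 < ν → D2 (D2 E) ν μ = fderiv ℝ (fderiv ℝ F) (ν, μ) (0, 1) (0, 1) := by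
    intro ν μ hν
    have h := (key2 (0,1) ν μ hν).congr_of_eventuallyEq (f₁ := fun y => D2 E ν y) ?_
    · exact h.deriv
    · exact Filter.Eventually.of_forall fun y => (hD2 ν y hν).deriv
  have hQ : ∀ ν μ : ℝ, 0 < ν → 0 < fderiv ℝ (fderiv ℝ F) (ν, μ) (1, σ) (1, σ) := by
    intro ν μ hν
    obtain ⟨hA, hC, hDet⟩ := hconv ν μ hν
    rw [h11 ν μ hν] at hA
    rw [h22 ν μ hν] at hC
    rw [h11 ν μ hν, h22 ν μ hν, h12 ν μ hν] at hDet
    have hsymm : fderiv ℝ (fderiv ℝ F) (ν, μ) (0, 1) (1, 0)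
        = fderiv ℝ (fderiv ℝ F) (ν, μ) (1, 0) (0, 1) :=
      ((hCA ν μ hν).isSymmSndFDerivAt (by simp)).eq (0,1) (1,0)
    set A := fderiv ℝ (fderiv ℝ F) (ν, μ) (1, 0) (1, 0) with hAdef
    set B := fderiv ℝ (fderiv ℝ F) (ν, μ) (1, 0) (0, 1) with hBdef
    set C := fderiv ℝ (fderiv ℝ F) (ν, μ) (0, 1) (0, 1) with hCdef
    have hexp : fderiv ℝ (fderiv ℝ F) (ν, μ) (1, σ) (1, σ) = A + σ * B + σ * (B + σ * C) := by
      have h1 : ((1:ℝ), σ) = ((1:ℝ), (0:ℝ)) + σ • ((0:ℝ), (1:ℝ)) := by simp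
      rw [h1]
      simp only [map_add, map_smul, ContinuousLinearMap.add_apply,
        ContinuousLinearMap.smul_apply, smul_eq_mul, hsymm, ← hAdef, ← hBdef, ← hCdef]
      try ring
    rw [hexp]
    rcases eq_or_ne σ 0 with h0 | h0
    · simpa [h0] using hA
    · have hσ2 : 0 < σ * σ := mul_self_pos.mpr h0
      nlinarith [sq_nonneg (A + σ * B), mul_pos hσ2 hDet]
  -- the curve t ↦ (1/t, σ/t)
  have hcurve : ∀ t : ℝ, 0 < t →
      HasDerivAt (fun x : ℝ => ((1/x : ℝ), σ/x)) ((-(t^2)⁻¹) • ((1:ℝ), σ)) t := by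
    intro t ht
    have h1 : HasDerivAt (fun x : ℝ => 1/x) (-(t^2)⁻¹) t := by
      simpa [one_div] using hasDerivAt_inv ht.ne'
    have h2 : HasDerivAt (fun x : ℝ => σ/x) (σ * -(t^2)⁻¹) t := by
      simpa [div_eq_mul_inv] using (hasDerivAt_inv ht.ne').const_mul σ
    convert h1.prodMk h2 using 1
    simp [Prod.ext_iff, smul_eq_mul]
    ring
  have hFc : ∀ t : ℝ, 0 < t → HasDerivAt (fun x : ℝ => F (1/x, σ/x))
      (-(t^2)⁻¹ * (fderiv ℝ F (1/t, σ/t) (1, σ))) t := by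
    intro t ht
    have h0 := (hFd (1/t) (σ/t) (one_div_pos.mpr ht)).hasFDerivAt.comp_hasDerivAt t (hcurve t ht)
    rw [map_smul, smul_eq_mul] at h0
    exact h0
  set φ : ℝ → ℝ := fun t => E (1/t) (σ/t) - t⁻¹ * (fderiv ℝ F (1/t, σ/t) (1, σ)) with hφdef
  have hgd : ∀ t : ℝ, 0 < t → HasDerivAt (fun x => Estar E x σ) (φ t) t := by
    intro t ht
    have h := (hasDerivAt_id t).mul (hFc t ht)
    have hval : φ t = 1 * F (1/t, σ/t) + t * (-(t^2)⁻¹ * (fderiv ℝ F (1/t, σ/t) (1, σ))) := by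
      have hFE : F (1/t, σ/t) = E (1/t) (σ/t) := rfl
      rw [hφdef]
      simp only [hFE]
      field_simp
      ring
    rw [hval]
    exact h
  have hφd : ∀ t : ℝ, 0 < t → HasDerivAt φ
      ((t⁻¹ * (t^2)⁻¹) * (fderiv ℝ (fderiv ℝ F) (1/t, σ/t) (1, σ) (1, σ))) t := by
    intro t ht
    have hpos : (0:ℝ) < 1/t := one_div_pos.mpr ht
    have hcomp : HasDerivAt (fun x : ℝ => fderiv ℝ F (1/x, σ/x))
        (fderiv ℝ (fderiv ℝ F) (1/t, σ/t) ((-(t^2)⁻¹) • ((1:ℝ), σ))) t :=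
      (hGd (1/t) (σ/t) hpos).hasFDerivAt.comp_hasDerivAt t (hcurve t ht)
    rw [map_smul] at hcomp
    have hL : HasDerivAt (fun x : ℝ => fderiv ℝ F (1/x, σ/x) (1, σ))
        (-(t^2)⁻¹ * (fderiv ℝ (fderiv ℝ F) (1/t, σ/t) (1, σ) (1, σ))) t := by
      have := hcomp.clm_apply (hasDerivAt_const t ((1:ℝ), σ))
      simpa [ContinuousLinearMap.smul_apply, smul_eq_mul] using this
    have h2 := (hasDerivAt_inv ht.ne').mul hL
    have h3 := (hFc t ht).sub h2
    have hfun : φ = fun x : ℝ => F (1/x, σ/x) - x⁻¹ * (fderiv ℝ F (1/x, σ/x) (1, σ)) := rfl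
    rw [hfun]
    refine (h3 : HasDerivAt (fun x : ℝ => F (1/x, σ/x) - x⁻¹ * (fderiv ℝ F (1/x, σ/x) (1, σ))) _ t).congr_deriv ?_
    ring
  have hQpos : ∀ t : ℝ, 0 < t →
      0 < fderiv ℝ (fderiv ℝ F) (1/t, σ/t) (1, σ) (1, σ) :=
    fun t ht => hQ (1/t) (σ/t) (one_div_pos.mpr ht)
  have hmono : StrictMonoOn φ (Set.Ioi 0) := by
    apply strictMonoOn_of_deriv_pos (convex_Ioi 0)
    · intro x hx
      exact ((hφd x hx).differentiableAt.continuousAt).continuousWithinAt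
    · intro x hx
      rw [interior_Ioi] at hx
      rw [(hφd x hx).deriv]
      exact mul_pos (mul_pos (inv_pos.mpr hx) (inv_pos.mpr (pow_pos hx 2))) (hQpos x hx)
  have hslope : ∀ a b : ℝ, 0 < a → a < b →
      φ a ≤ (Estar E b σ - Estar E a σ) / (b - a) ∧
      (Estar E b σ - Estar E a σ) / (b - a) ≤ φ b := by
    intro a b ha hab
    have hmem : ∀ x ∈ Set.Icc a b, 0 < x := fun x hx => lt_of_lt_of_le ha hx.1
    obtain ⟨ξ, hξ, hξeq⟩ := exists_hasDerivAt_eq_slope (fun x => Estar E x σ) φ hab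
      (fun x hx => ((hgd x (hmem x hx)).differentiableAt.continuousAt).continuousWithinAt)
      (fun x hx => hgd x (hmem x (Set.mem_Icc_of_Ioo hx)))
    have hξ0 : 0 < ξ := lt_trans ha hξ.1
    constructor
    · rw [← hξeq]
      exact (hmono (Set.mem_Ioi.mpr ha) (Set.mem_Ioi.mpr hξ0) hξ.1).le
    · rw [← hξeq]
      exact (hmono (Set.mem_Ioi.mpr hξ0) (Set.mem_Ioi.mpr (lt_trans ha hab)) hξ.2).le
  -- growth bounds
  have hgrow1 : ∀ t : ℝ, 0 < t → K₀ * (1/t) ^ (r-1) - K₀' * t ≤ Estar E t σ := by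
    intro t ht
    have h := hgrow (1/t) (σ/t) (one_div_pos.mpr ht)
    have e1 : (0:ℝ) ≤ (1/t) ^ (-s) := rpow_nonneg (one_div_pos.mpr ht).le _
    have e2 : (0:ℝ) ≤ |σ/t| ^ p := rpow_nonneg (abs_nonneg _) _
    have e3 : t * (1/t) ^ r = (1/t) ^ (r - 1) := by
      rw [rpow_sub (one_div_pos.mpr ht), rpow_one]
      field_simp
    have hEs : Estar E t σ = t * E (1/t) (σ/t) := rfl
    rw [hEs]
    calc K₀ * (1/t) ^ (r-1) - K₀' * t = t * (K₀ * (1/t)^r - K₀') := by rw [← e3]; ring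
      _ ≤ t * (K₀ * ((1/t)^r + (1/t)^(-s) + |σ/t|^p) - K₀') := by
          apply mul_le_mul_of_nonneg_left ?_ ht.le
          nlinarith [mul_nonneg hK₀.le e1, mul_nonneg hK₀.le e2]
      _ ≤ t * E (1/t) (σ/t) := mul_le_mul_of_nonneg_left h ht.le
  have hgrow2 : ∀ t : ℝ, 0 < t → t * (K₀ * t^s - K₀') ≤ Estar E t σ := by
    intro t ht
    have h := hgrow (1/t) (σ/t) (one_div_pos.mpr ht)
    have e0 : (0:ℝ) ≤ (1/t) ^ r := rpow_nonneg (one_div_pos.mpr ht).le _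
    have e2 : (0:ℝ) ≤ |σ/t| ^ p := rpow_nonneg (abs_nonneg _) _
    have e3 : (1/t) ^ (-s) = t ^ s := by
      rw [one_div, inv_rpow ht.le, rpow_neg ht.le, inv_inv]
    have hEs : Estar E t σ = t * E (1/t) (σ/t) := rfl
    rw [hEs]
    calc t * (K₀ * t^s - K₀') = t * (K₀ * (1/t)^(-s) - K₀') := by rw [e3]
      _ ≤ t * (K₀ * ((1/t)^r + (1/t)^(-s) + |σ/t|^p) - K₀') := by
          apply mul_le_mul_of_nonneg_left ?_ ht.le
          nlinarith [mul_nonneg hK₀.le e0, mul_nonneg hK₀.le e2]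
      _ ≤ t * E (1/t) (σ/t) := mul_le_mul_of_nonneg_left h ht.le
  -- Estar blows up at 0⁺
  have hg0 : Tendsto (fun t => Estar E t σ) (𝓝[>] (0:ℝ)) atTop := by
    apply tendsto_atTop_mono' (𝓝[>] (0:ℝ))
      (f₁ := fun t : ℝ => K₀ * (1/t) ^ (r-1) - |K₀'|)
    · have hIio : Set.Iio (1:ℝ) ∈ 𝓝[>] (0:ℝ) := nhdsWithin_le_nhds (Iio_mem_nhds one_pos)
      filter_upwards [self_mem_nhdsWithin, hIio] with t ht ht1
      have ht' : (0:ℝ) < t := ht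
      have ht1' : t < 1 := ht1
      have h1 := hgrow1 t ht'
      nlinarith [mul_le_mul_of_nonneg_right (le_abs_self K₀') ht'.le,
        mul_le_of_le_one_right (abs_nonneg K₀') ht1'.le]
    · have h1 : Tendsto (fun t : ℝ => (1/t) ^ (r-1)) (𝓝[>] (0:ℝ)) atTop := by
        have := (tendsto_rpow_atTop (by linarith : (0:ℝ) < r - 1)).comp tendsto_inv_nhdsGT_zero
        simpa [Function.comp_def, one_div] using this
      have h2 := h1.const_mul_atTop hK₀
      simpa [sub_eq_add_neg] using tendsto_atTop_add_const_right _ (-|K₀'|) h2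
  -- Estar blows up at ∞
  have hsTop : Tendsto (fun t : ℝ => K₀ * t^s - K₀') atTop atTop := by
    simpa [sub_eq_add_neg] using
      tendsto_atTop_add_const_right _ (-K₀') ((tendsto_rpow_atTop hs).const_mul_atTop hK₀)
  have hgTop : Tendsto (fun t => Estar E t σ) atTop atTop := by
    apply tendsto_atTop_mono' atTop (f₁ := fun t : ℝ => t)
    · filter_upwards [hsTop.eventually_ge_atTop 1, eventually_gt_atTop (0:ℝ)] with t h1 ht
      have := hgrow2 t ht
      nlinarith
    · exact tendsto_id
  constructor
  · -- limit at 0⁺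
    have hb : Tendsto (fun t => Estar E 1 σ - Estar E t σ) (𝓝[>] (0:ℝ)) atBot := by
      have hneg : Tendsto (fun t => -(Estar E t σ)) (𝓝[>] (0:ℝ)) atBot :=
        tendsto_neg_atTop_atBot.comp hg0
      simpa [sub_eq_add_neg] using tendsto_atBot_add_const_left (𝓝[>] (0:ℝ)) (Estar E 1 σ) hneg
    apply tendsto_atBot_mono' (𝓝[>] (0:ℝ)) ?_ hb
    have hIio : Set.Iio (1:ℝ) ∈ 𝓝[>] (0:ℝ) := nhdsWithin_le_nhds (Iio_mem_nhds one_pos)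
    filter_upwards [self_mem_nhdsWithin, hIio, hg0.eventually_ge_atTop (Estar E 1 σ)]
      with t ht ht1 hge
    have ht' : (0:ℝ) < t := ht
    have ht1' : t < 1 := ht1
    have hD : D1 (Estar E) t σ = φ t := (hgd t ht').deriv
    rw [hD]
    have hsl := (hslope t 1 ht' ht1').1
    have h1t : 0 < 1 - t := by linarith
    have hN : Estar E 1 σ - Estar E t σ ≤ 0 := by linarith
    have hdd : (Estar E 1 σ - Estar E t σ)/(1-t) ≤ Estar E 1 σ - Estar E t σ := by
      rw [div_le_iff₀ h1t]
      nlinarith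
    exact hsl.trans hdd
  · -- limit at ∞
    have hb : Tendsto (fun t : ℝ => K₀ * t^s - (K₀' + |Estar E 1 σ|)) atTop atTop := by
      simpa [sub_eq_add_neg] using tendsto_atTop_add_const_right _ (-(K₀' + |Estar E 1 σ|))
        ((tendsto_rpow_atTop hs).const_mul_atTop hK₀)
    apply tendsto_atTop_mono' atTop ?_ hb
    filter_upwards [eventually_ge_atTop (2:ℝ), hgTop.eventually_ge_atTop (Estar E 1 σ),
      hsTop.eventually_ge_atTop 1] with t ht2 hge hX
    have ht : (0:ℝ) < t := by linarith
    have h1t : (1:ℝ) < t := by linarith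
    have hD : D1 (Estar E) t σ = φ t := (hgd t ht).deriv
    rw [hD]
    have hsl := (hslope 1 t one_pos h1t).2
    have hg2 := hgrow2 t ht
    have hden : (0:ℝ) < t - 1 := by linarith
    have hkey : K₀ * t^s - (K₀' + |Estar E 1 σ|) ≤ (Estar E t σ - Estar E 1 σ)/(t-1) := by
      rw [le_div_iff₀ hden]
      nlinarith [le_abs_self (Estar E 1 σ), abs_nonneg (Estar E 1 σ)]
    exact hkey.trans hsl
end
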